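/- For integers l₁ ≥ 1 and l₂ ≥ 0 with l₁ ≠ l₂ + 1, and for any θ, φ ∈ ℝ, the average over k ∈ [−π, π] (with measure dk/(2π)) of the vector (L_1(k))^{l₂} · L_H(k) · (L_1(k))^{l₁} applied to the Bloch vector (1/2)(1, cos φ sin θ, sin φ sin θ, cos θ) equals (1/2)(1, 0, 0, 0). -/
import Mathlib

open Real

noncomputable def L1 (k : ℝ) : Matrix (Fin 4) (Fin 4) ℝ :=
  !![1, 0, 0, 0;
     0, Real.cos (2 * k), -Real.sin (2 * k), 0;
     0, Real.sin (2 * k), Real.cos (2 * k), 0;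
     0, 0, 0, 1]

noncomputable def LH (k : ℝ) : Matrix (Fin 4) (Fin 4) ℝ :=
  !![1, 0, 0, 0;
     0, 0, Real.sin (2 * k), Real.cos (2 * k);
     0, 0, -Real.cos (2 * k), Real.sin (2 * k);
     0, 1, 0, 0]

noncomputable def blochIn (θ φ : ℝ) : Fin 4 → ℝ :=
  ![1 / 2, Real.cos φ * Real.sin θ / 2, Real.sin φ * Real.sin θ / 2, Real.cos θ / 2]

noncomputable def Rot (a : ℝ) : Matrix (Fin 4) (Fin 4) ℝ :=
  !![1, 0, 0, 0;
     0, Real.cos a, -Real.sin a, 0;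
     0, Real.sin a, Real.cos a, 0;
     0, 0, 0, 1]

lemma Rot_mul (a b : ℝ) : Rot a * Rot b = Rot (a + b) := by
  ext i j
  fin_cases i <;> fin_cases j <;>
    simp [Rot, Matrix.mul_apply, Fin.sum_univ_four, Real.cos_add, Real.sin_add,
      Matrix.vecHead, Matrix.vecTail] <;> ring

lemma L1_pow (k : ℝ) (n : ℕ) : L1 k ^ n = Rot (2 * n * k) := by
  induction n with
  | zero =>
    ext i j
    fin_cases i <;> fin_cases j <;> simp [Rot, Matrix.one_apply, Matrix.vecHead, Matrix.vecTail]
  | succ n ih =>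
    rw [pow_succ, ih, show L1 k = Rot (2 * k) from rfl, Rot_mul]
    norm_num
    ring_nf

lemma integral_cos_int (m : ℤ) (hm : m ≠ 0) (b : ℝ) :
    ∫ k in (-π)..π, Real.cos ((m : ℝ) * k + b) = 0 := by
  have hm' : (m : ℝ) ≠ 0 := Int.cast_ne_zero.mpr hm
  rw [intervalIntegral.integral_comp_mul_add Real.cos hm' b, integral_cos]
  have h1 : Real.sin ((m : ℝ) * π) = 0 := Real.sin_int_mul_pi m
  rw [show (m : ℝ) * (-π) = -((m : ℝ) * π) by ring, Real.sin_add, Real.sin_add]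
  simp [h1]

lemma integral_sin_int (m : ℤ) (hm : m ≠ 0) (b : ℝ) :
    ∫ k in (-π)..π, Real.sin ((m : ℝ) * k + b) = 0 := by
  have hm' : (m : ℝ) ≠ 0 := Int.cast_ne_zero.mpr hm
  rw [intervalIntegral.integral_comp_mul_add Real.sin hm' b, integral_sin]
  have h1 : Real.sin ((m : ℝ) * π) = 0 := Real.sin_int_mul_pi m
  rw [show (m : ℝ) * (-π) = -((m : ℝ) * π) by ring, Real.cos_add, Real.cos_add]
  simp [h1]

lemma iiCos (c d e : ℝ) :
    IntervalIntegrable (fun k => c * Real.cos (d * k + e)) MeasureTheory.volume (-π) π :=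
  (Continuous.intervalIntegrable (by continuity) _ _)

lemma iiSin (c d e : ℝ) :
    IntervalIntegrable (fun k => c * Real.sin (d * k + e)) MeasureTheory.volume (-π) π :=
  (Continuous.intervalIntegrable (by continuity) _ _)

theorem oneHadamard_maximalEntanglement
    (l₁ l₂ : ℕ) (h₁ : 1 ≤ l₁) (h : l₁ ≠ l₂ + 1) (θ φ : ℝ) (i : Fin 4) :
    (1 / (2 * π)) * ∫ k in (-π)..π,
        (((L1 k) ^ l₂ * LH k * (L1 k) ^ l₁).mulVec (blochIn θ φ)) i
      = (![1 / 2, 0, 0, 0] : Fin 4 → ℝ) i := by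
  have ha : (2 * (l₁ : ℤ)) ≠ 0 := by omega
  have hb : (2 * (l₂ : ℤ) + 2) ≠ 0 := by omega
  have hmb : (2 * (l₁ : ℤ) - 2 * l₂ - 2) ≠ 0 := by omega
  have hpb : (2 * (l₁ : ℤ) + 2 * l₂ + 2) ≠ 0 := by omega
  -- case 0
  have c0 : (1 / (2 * π)) * (∫ k in (-π)..π,
      ((L1 k) ^ l₂ * LH k * (L1 k) ^ l₁).mulVec (blochIn θ φ) (0 : Fin 4)) = 1 / 2 := by
    have hpt : ∀ k, ((L1 k) ^ l₂ * LH k * (L1 k) ^ l₁).mulVec (blochIn θ φ) (0 : Fin 4)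
        = 1 / 2 := by
      intro k
      rw [L1_pow, L1_pow]
      simp [Rot, LH, blochIn, Matrix.mulVec, Matrix.mul_apply, dotProduct,
        Fin.sum_univ_four, Matrix.vecHead, Matrix.vecTail]
    rw [intervalIntegral.integral_congr (g := fun _ => (1 / 2 : ℝ)) (fun k _ => hpt k),
      intervalIntegral.integral_const]
    field_simp
    ring
  -- case 1
  have c1 : (1 / (2 * π)) * (∫ k in (-π)..π,
      ((L1 k) ^ l₂ * LH k * (L1 k) ^ l₁).mulVec (blochIn θ φ) (1 : Fin 4)) = 0 := by
    have hpt : ∀ k, ((L1 k) ^ l₂ * LH k * (L1 k) ^ l₁).mulVec (blochIn θ φ) (1 : Fin 4)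
        = Real.sin θ / 4 * Real.cos (((2 * (l₁ : ℤ) - 2 * l₂ - 2 : ℤ) : ℝ) * k + φ)
          + -(Real.sin θ / 4) * Real.cos (((2 * (l₁ : ℤ) + 2 * l₂ + 2 : ℤ) : ℝ) * k + φ)
          + Real.cos θ / 2 * Real.cos (((2 * (l₂ : ℤ) + 2 : ℤ) : ℝ) * k + 0) := by
      intro k
      rw [L1_pow, L1_pow]
      push_cast
      rw [show (2 * (l₁:ℝ) - 2 * l₂ - 2) * k + φ
            = (2 * (l₁:ℝ) * k + φ) - (2 * (l₂:ℝ) * k + 2 * k) by ring,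
          show (2 * (l₁:ℝ) + 2 * l₂ + 2) * k + φ
            = (2 * (l₁:ℝ) * k + φ) + (2 * (l₂:ℝ) * k + 2 * k) by ring,
          show (2 * (l₂:ℝ) + 2) * k + 0 = (2 * (l₂:ℝ) * k) + 2 * k by ring]
      simp [Rot, LH, blochIn, Matrix.mulVec, Matrix.mul_apply, dotProduct,
        Fin.sum_univ_four, Matrix.vecHead, Matrix.vecTail, Real.cos_add, Real.sin_add,
        Real.cos_sub, Real.sin_sub]
      ring
    rw [intervalIntegral.integral_congr (fun k _ => hpt k),
      intervalIntegral.integral_add ((iiCos _ _ _).add (iiCos _ _ _)) (iiCos _ _ _),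
      intervalIntegral.integral_add (iiCos _ _ _) (iiCos _ _ _),
      intervalIntegral.integral_const_mul, intervalIntegral.integral_const_mul,
      intervalIntegral.integral_const_mul,
      integral_cos_int _ hmb, integral_cos_int _ hpb, integral_cos_int _ hb]
    ring
  -- case 2
  have c2 : (1 / (2 * π)) * (∫ k in (-π)..π,
      ((L1 k) ^ l₂ * LH k * (L1 k) ^ l₁).mulVec (blochIn θ φ) (2 : Fin 4)) = 0 := by
    have hpt : ∀ k, ((L1 k) ^ l₂ * LH k * (L1 k) ^ l₁).mulVec (blochIn θ φ) (2 : Fin 4)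
        = -(Real.sin θ / 4) * Real.sin (((2 * (l₁ : ℤ) + 2 * l₂ + 2 : ℤ) : ℝ) * k + φ)
          + -(Real.sin θ / 4) * Real.sin (((2 * (l₁ : ℤ) - 2 * l₂ - 2 : ℤ) : ℝ) * k + φ)
          + Real.cos θ / 2 * Real.sin (((2 * (l₂ : ℤ) + 2 : ℤ) : ℝ) * k + 0) := by
      intro k
      rw [L1_pow, L1_pow]
      push_cast
      rw [show (2 * (l₁:ℝ) - 2 * l₂ - 2) * k + φ
            = (2 * (l₁:ℝ) * k + φ) - (2 * (l₂:ℝ) * k + 2 * k) by ring,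
          show (2 * (l₁:ℝ) + 2 * l₂ + 2) * k + φ
            = (2 * (l₁:ℝ) * k + φ) + (2 * (l₂:ℝ) * k + 2 * k) by ring,
          show (2 * (l₂:ℝ) + 2) * k + 0 = (2 * (l₂:ℝ) * k) + 2 * k by ring]
      simp [Rot, LH, blochIn, Matrix.mulVec, Matrix.mul_apply, dotProduct,
        Fin.sum_univ_four, Matrix.vecHead, Matrix.vecTail, Real.cos_add, Real.sin_add,
        Real.cos_sub, Real.sin_sub]
      ring
    rw [intervalIntegral.integral_congr (fun k _ => hpt k),
      intervalIntegral.integral_add ((iiSin _ _ _).add (iiSin _ _ _)) (iiSin _ _ _),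
      intervalIntegral.integral_add (iiSin _ _ _) (iiSin _ _ _),
      intervalIntegral.integral_const_mul, intervalIntegral.integral_const_mul,
      intervalIntegral.integral_const_mul,
      integral_sin_int _ hmb, integral_sin_int _ hpb, integral_sin_int _ hb]
    ring
  -- case 3
  have c3 : (1 / (2 * π)) * (∫ k in (-π)..π,
      ((L1 k) ^ l₂ * LH k * (L1 k) ^ l₁).mulVec (blochIn θ φ) (3 : Fin 4)) = 0 := by
    have hpt : ∀ k, ((L1 k) ^ l₂ * LH k * (L1 k) ^ l₁).mulVec (blochIn θ φ) (3 : Fin 4)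
        = Real.sin θ / 2 * Real.cos (((2 * (l₁ : ℤ) : ℤ) : ℝ) * k + φ) := by
      intro k
      rw [L1_pow, L1_pow]
      push_cast
      rw [show (2 * (l₁:ℝ)) * k + φ = (2 * (l₁:ℝ) * k) + φ by ring]
      simp [Rot, LH, blochIn, Matrix.mulVec, Matrix.mul_apply, dotProduct,
        Fin.sum_univ_four, Matrix.vecHead, Matrix.vecTail, Real.cos_add, Real.sin_add]
      ring
    rw [intervalIntegral.integral_congr (fun k _ => hpt k),
      intervalIntegral.integral_const_mul, integral_cos_int _ ha]
    ring
  fin_cases i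
  · exact c0
  · exact c1
  · exact c2
  · exact c3
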